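/- Let (X,Y,R) satisfy Y ⟂ R | X and positivity, with m(x) = Pr[Y=1|X=x,R=1], w(x) = Pr[R=0|X=x]/Pr[R=1|X=x], and α₀ = E[m(X) | R=0] > 0. Suppose either m* = m (and w* arbitrary bounded) or w* = w (and m* arbitrary bounded). Then for any measurable g(X) ∈ {0,1}, the ratio E[ I(R=0) g(X) m*(X) + w*(X) I(R=1) g(X)(I(Y=1) − m*(X)) ] / E[ I(R=0) m*(X) + w*(X) I(R=1)(I(Y=1) − m*(X)) ] equals Pr[g(X)=1 | Y=1, R=0]. -/

import Mathlib

open MeasureTheory Real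

private lemma abs_mul_le' {a b A B : ℝ} (ha : |a| ≤ A) (hb : |b| ≤ B) : |a * b| ≤ A * B := by
  rw [abs_mul]
  exact mul_le_mul ha hb (abs_nonneg _) ((abs_nonneg a).trans ha)

private lemma ib {Ω : Type*} [MeasurableSpace Ω] {μ : Measure Ω} [IsProbabilityMeasure μ]
    {h : Ω → ℝ} (hh : AEStronglyMeasurable h μ) {K : ℝ} (hb : ∀ᵐ ω ∂μ, |h ω| ≤ K) :
    Integrable h μ :=
  (integrable_const K).mono' hh (by simpa [Real.norm_eq_abs] using hb)

private lemma scaled_cond {Ω 𝓧 : Type*} [MeasurableSpace Ω] [MeasurableSpace 𝓧]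
    {μ : Measure Ω} {X : Ω → 𝓧} {A B : Ω → ℝ}
    (H : ∀ f : 𝓧 → ℝ, Measurable f → (∀ x, |f x| ≤ 1) →
      ∫ ω, f (X ω) * A ω ∂μ = ∫ ω, f (X ω) * B ω ∂μ)
    (f : 𝓧 → ℝ) (hf : Measurable f) (K : ℝ) (hK : ∀ x, |f x| ≤ K) :
    ∫ ω, f (X ω) * A ω ∂μ = ∫ ω, f (X ω) * B ω ∂μ := by
  have hD0 : (0:ℝ) < max K 1 := lt_max_of_lt_right one_pos
  have h1 : ∀ x, |f x / max K 1| ≤ 1 := by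
    intro x
    rw [abs_div, abs_of_pos hD0, div_le_one hD0]
    exact (hK x).trans (le_max_left _ _)
  have h2 := H (fun x => f x / max K 1) (hf.div_const _) h1
  simp only [div_mul_eq_mul_div, integral_div] at h2
  have h3 := congrArg (fun t => t * max K 1) h2
  simpa [div_mul_cancel₀, hD0.ne'] using h3

private lemma ae_not_of_zero {Ω 𝓧 : Type*} [MeasurableSpace Ω] [MeasurableSpace 𝓧]
    {μ : Measure Ω} [IsProbabilityMeasure μ]
    {X : Ω → 𝓧} {b : Ω → ℝ}
    (hb0 : ∀ ω, 0 ≤ b ω) {S : Set 𝓧}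
    (hz : ∫ ω, S.indicator (fun _ => (1:ℝ)) (X ω) * b ω ∂μ = 0)
    (hI : Integrable (fun ω => S.indicator (fun _ => (1:ℝ)) (X ω) * b ω) μ) :
    ∀ᵐ ω ∂μ, ¬(X ω ∈ S ∧ 0 < b ω) := by
  have hnn : (0 : Ω → ℝ) ≤ᵐ[μ] fun ω => S.indicator (fun _ => (1:ℝ)) (X ω) * b ω := by
    refine Filter.Eventually.of_forall fun ω => ?_
    have : (0:ℝ) ≤ S.indicator (fun _ => (1:ℝ)) (X ω) :=
      Set.indicator_nonneg (fun _ _ => zero_le_one) _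
    exact mul_nonneg this (hb0 ω)
  have := (integral_eq_zero_iff_of_nonneg_ae hnn hI).mp hz
  filter_upwards [this] with ω hω
  rintro ⟨hmem, hpos⟩
  rw [Set.indicator_of_mem hmem] at hω
  simp only [Pi.zero_apply, one_mul] at hω
  exact hpos.ne' hω

private lemma ae_unit {Ω 𝓧 : Type*} [MeasurableSpace Ω] [MeasurableSpace 𝓧]
    {μ : Measure Ω} [IsProbabilityMeasure μ]
    {X : Ω → 𝓧} (hX : Measurable X) {u b : Ω → ℝ} {v : 𝓧 → ℝ}
    (hu : Measurable u) (hb : Measurable b) (hv : Measurable v)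
    (hub : ∀ ω, 0 ≤ u ω ∧ u ω ≤ b ω ∧ b ω ≤ 1)
    (H : ∀ f : 𝓧 → ℝ, Measurable f → (∀ x, |f x| ≤ 1) →
      ∫ ω, f (X ω) * u ω ∂μ = ∫ ω, f (X ω) * (b ω * v (X ω)) ∂μ) :
    ∀ᵐ ω ∂μ, 0 < b ω → 0 ≤ v (X ω) ∧ v (X ω) ≤ 1 := by
  have hb0 : ∀ ω, 0 ≤ b ω := fun ω => le_trans (hub ω).1 (hub ω).2.1
  have hb1 : ∀ ω, |b ω| ≤ 1 := fun ω => abs_le.2 ⟨by linarith [hb0 ω], (hub ω).2.2⟩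
  have hu1 : ∀ ω, |u ω| ≤ 1 := fun ω =>
    abs_le.2 ⟨by linarith [(hub ω).1], le_trans (hub ω).2.1 (hub ω).2.2⟩
  have main : ∀ S : Set 𝓧, MeasurableSet S → ∀ c n : ℝ, 0 < c →
      ((1 < c ∧ ∀ x ∈ S, c < v x ∧ v x ≤ n) ∨ (∀ x ∈ S, v x < -c ∧ -n ≤ v x)) →
      ∀ᵐ ω ∂μ, ¬(X ω ∈ S ∧ 0 < b ω) := by
    intro S hS c n hc hcase
    set f : 𝓧 → ℝ := S.indicator (fun _ => (1:ℝ)) with hf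
    have hfm : Measurable f := measurable_const.indicator hS
    have hf01 : ∀ x, 0 ≤ f x ∧ f x ≤ 1 := by
      intro x; by_cases h : x ∈ S <;> simp [hf, h]
    have hf1 : ∀ x, |f x| ≤ 1 := fun x => abs_le.2 ⟨by linarith [(hf01 x).1], (hf01 x).2⟩
    have heq := H f hfm hf1
    have Ifu : Integrable (fun ω => f (X ω) * u ω) μ :=
      ib ((hfm.comp hX).mul hu).aestronglyMeasurable
        (Filter.Eventually.of_forall fun ω => by
          simpa using abs_mul_le' (hf1 (X ω)) (hu1 ω))
    have Ifb : Integrable (fun ω => f (X ω) * b ω) μ :=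
      ib ((hfm.comp hX).mul hb).aestronglyMeasurable
        (Filter.Eventually.of_forall fun ω => by
          simpa using abs_mul_le' (hf1 (X ω)) (hb1 ω))
    have hvbd : ∀ ω, |f (X ω) * (b ω * v (X ω))| ≤ |n| + |c| := by
      intro ω
      by_cases h : X ω ∈ S
      · have hv' : |v (X ω)| ≤ |n| + |c| := by
          rcases hcase with ⟨_, h2⟩ | h2
          · have := h2 _ h
            rw [abs_le]
            constructor
            · nlinarith [abs_nonneg n, le_abs_self c, this.1]
            · nlinarith [abs_nonneg c, le_abs_self n, this.2]
          · have := h2 _ h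
            rw [abs_le]
            constructor
            · nlinarith [abs_nonneg c, le_abs_self n, this.2]
            · nlinarith [abs_nonneg n, abs_nonneg c, this.1]
        calc |f (X ω) * (b ω * v (X ω))| ≤ 1 * (1 * (|n| + |c|)) :=
              abs_mul_le' (hf1 _) (abs_mul_le' (hb1 _) hv')
          _ = |n| + |c| := by ring
      · simp [hf, Set.indicator_of_notMem h]
        positivity
    have Ifbv : Integrable (fun ω => f (X ω) * (b ω * v (X ω))) μ :=
      ib ((hfm.comp hX).mul (hb.mul (hv.comp hX))).aestronglyMeasurable
        (Filter.Eventually.of_forall hvbd)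
    have e0 : 0 ≤ ∫ ω, f (X ω) * u ω ∂μ :=
      integral_nonneg fun ω => mul_nonneg (hf01 _).1 (hub ω).1
    have e0b : 0 ≤ ∫ ω, f (X ω) * b ω ∂μ :=
      integral_nonneg fun ω => mul_nonneg (hf01 _).1 (hb0 ω)
    have e2 : ∫ ω, f (X ω) * u ω ∂μ ≤ ∫ ω, f (X ω) * b ω ∂μ :=
      integral_mono Ifu Ifb fun ω => mul_le_mul_of_nonneg_left (hub ω).2.1 (hf01 _).1
    have hzero : ∫ ω, f (X ω) * b ω ∂μ = 0 := by
      rcases hcase with ⟨hc1, h2⟩ | h2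
      · have e3 : c * ∫ ω, f (X ω) * b ω ∂μ ≤ ∫ ω, f (X ω) * (b ω * v (X ω)) ∂μ := by
          rw [← integral_const_mul]
          refine integral_mono (Ifb.const_mul c) Ifbv fun ω => ?_
          by_cases h : X ω ∈ S
          · have hfx : f (X ω) = 1 := Set.indicator_of_mem h _
            rw [hfx]
            have := (h2 _ h).1
            nlinarith [hb0 ω]
          · have hfx : f (X ω) = 0 := Set.indicator_of_notMem h _
            simp [hfx]
        rw [← heq] at e3
        nlinarith
      · have e3 : ∫ ω, f (X ω) * (b ω * v (X ω)) ∂μ ≤ (-c) * ∫ ω, f (X ω) * b ω ∂μ := by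
          rw [← integral_const_mul]
          refine integral_mono Ifbv (Ifb.const_mul (-c)) fun ω => ?_
          by_cases h : X ω ∈ S
          · have hfx : f (X ω) = 1 := Set.indicator_of_mem h _
            rw [hfx]
            have := (h2 _ h).1
            nlinarith [hb0 ω]
          · have hfx : f (X ω) = 0 := Set.indicator_of_notMem h _
            simp [hfx]
        rw [← heq] at e3
        nlinarith
    exact ae_not_of_zero hb0 hzero Ifb
  have Hup : ∀ k n : ℕ, ∀ᵐ ω ∂μ,
      ¬(X ω ∈ {x | 1 + 1/((k:ℝ)+1) < v x ∧ v x ≤ n} ∧ 0 < b ω) := by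
    intro k n
    refine main _ ?_ (1 + 1/((k:ℝ)+1)) n (by positivity) (Or.inl ⟨by
      have : (0:ℝ) < 1/((k:ℝ)+1) := by positivity
      linarith, fun x hx => hx⟩)
    exact (measurableSet_lt measurable_const hv).inter (measurableSet_le hv measurable_const)
  have Hlo : ∀ k n : ℕ, ∀ᵐ ω ∂μ,
      ¬(X ω ∈ {x | v x < -(1/((k:ℝ)+1)) ∧ -(n:ℝ) ≤ v x} ∧ 0 < b ω) := by
    intro k n
    refine main _ ?_ (1/((k:ℝ)+1)) n (by positivity) (Or.inr fun x hx => hx)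
    exact (measurableSet_lt hv measurable_const).inter (measurableSet_le measurable_const hv)
  have Hup' := ae_all_iff.2 fun k => ae_all_iff.2 fun n => Hup k n
  have Hlo' := ae_all_iff.2 fun k => ae_all_iff.2 fun n => Hlo k n
  filter_upwards [Hup', Hlo'] with ω h1 h2 hbpos
  constructor
  · by_contra hneg
    push_neg at hneg
    obtain ⟨k, hk⟩ := exists_nat_one_div_lt (show (0:ℝ) < -v (X ω) by linarith)
    obtain ⟨n, hn⟩ := exists_nat_ge (-v (X ω))
    exact h2 k n ⟨⟨by linarith, by linarith⟩, hbpos⟩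
  · by_contra hneg
    push_neg at hneg
    obtain ⟨k, hk⟩ := exists_nat_one_div_lt (show (0:ℝ) < v (X ω) - 1 by linarith)
    obtain ⟨n, hn⟩ := exists_nat_ge (v (X ω))
    exact h1 k n ⟨⟨by linarith, hn⟩, hbpos⟩

theorem sensitivity_doubly_robust
    {Ω 𝓧 : Type*} [MeasurableSpace Ω] [MeasurableSpace 𝓧]
    (μ : Measure Ω) [IsProbabilityMeasure μ]
    (X : Ω → 𝓧) (Y R : Ω → ℝ) (g m p mstar wstar : 𝓧 → ℝ)
    (hX : Measurable X) (hY : Measurable Y) (hR : Measurable R)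
    (hg : Measurable g) (hm : Measurable m) (hp : Measurable p)
    (hms : Measurable mstar) (hws : Measurable wstar)
    (hYbin : ∀ ω, Y ω = 0 ∨ Y ω = 1) (hRbin : ∀ ω, R ω = 0 ∨ R ω = 1)
    (hgbin : ∀ x, g x = 0 ∨ g x = 1)
    -- working models bounded
    (C : ℝ) (hmsbd : ∀ x, |mstar x| ≤ C) (hwsbd : ∀ x, |wstar x| ≤ C)
    -- `m` is a version of `Pr[Y=1 | X, R=1]`
    (hm_cond : ∀ f : 𝓧 → ℝ, Measurable f → (∀ x, |f x| ≤ 1) →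
      ∫ ω, f (X ω) * R ω * Y ω ∂μ = ∫ ω, f (X ω) * R ω * m (X ω) ∂μ)
    -- conditional exchangeability `Y ⟂ R | X`
    (hexch : ∀ f : 𝓧 → ℝ, Measurable f → (∀ x, |f x| ≤ 1) →
      ∫ ω, f (X ω) * (1 - R ω) * Y ω ∂μ = ∫ ω, f (X ω) * (1 - R ω) * m (X ω) ∂μ)
    -- `p` is a version of `Pr[R=1 | X]`
    (hp_cond : ∀ f : 𝓧 → ℝ, Measurable f → (∀ x, |f x| ≤ 1) →
      ∫ ω, f (X ω) * R ω ∂μ = ∫ ω, f (X ω) * p (X ω) ∂μ)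
    -- positivity
    (hpos : ∀ᵐ ω ∂μ, 0 < p (X ω))
    -- `α₀ = E[m(X) | R=0] > 0` (target population nonempty)
    (hR0 : 0 < ∫ ω, (1 - R ω) ∂μ)
    (hα₀ : 0 < ∫ ω, (1 - R ω) * m (X ω) ∂μ)
    -- either the outcome model or the participation-odds model is correctly specified
    (hdr : (∀ x, mstar x = m x) ∨ (∀ x, wstar x = (1 - p x) / p x)) :
    (∫ ω, (1 - R ω) * g (X ω) * mstar (X ω)
        + wstar (X ω) * R ω * g (X ω) * (Y ω - mstar (X ω)) ∂μ)
      / (∫ ω, (1 - R ω) * mstar (X ω)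
        + wstar (X ω) * R ω * (Y ω - mstar (X ω)) ∂μ)
    = (∫ ω, (1 - R ω) * g (X ω) * Y ω ∂μ) / (∫ ω, (1 - R ω) * Y ω ∂μ) := by
  have hR01 : ∀ ω, 0 ≤ R ω ∧ R ω ≤ 1 := fun ω => by rcases hRbin ω with h | h <;> simp [h]
  have hY01 : ∀ ω, 0 ≤ Y ω ∧ Y ω ≤ 1 := fun ω => by rcases hYbin ω with h | h <;> simp [h]
  have hRb : ∀ ω, |R ω| ≤ 1 := fun ω => abs_le.2 ⟨by linarith [(hR01 ω).1], (hR01 ω).2⟩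
  have hYb : ∀ ω, |Y ω| ≤ 1 := fun ω => abs_le.2 ⟨by linarith [(hY01 ω).1], (hY01 ω).2⟩
  have h1Rb : ∀ ω, |1 - R ω| ≤ 1 :=
    fun ω => abs_le.2 ⟨by linarith [(hR01 ω).2], by linarith [(hR01 ω).1]⟩
  have hg1 : ∀ x, |g x| ≤ 1 := fun x => by rcases hgbin x with h | h <;> simp [h]
  set D := max C 1 with hDdef
  have hmsD : ∀ x, |mstar x| ≤ D := fun x => (hmsbd x).trans (le_max_left _ _)
  have hwsD : ∀ x, |wstar x| ≤ D := fun x => (hwsbd x).trans (le_max_left _ _)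
  -- a.e. the true models take values in [0,1]
  have m01 : ∀ᵐ ω ∂μ, 0 ≤ m (X ω) ∧ m (X ω) ≤ 1 := by
    have h1 : ∀ᵐ ω ∂μ, 0 < R ω → 0 ≤ m (X ω) ∧ m (X ω) ≤ 1 :=
      ae_unit hX (hR.mul hY) hR hm
        (fun ω => ⟨mul_nonneg (hR01 ω).1 (hY01 ω).1,
          by show R ω * Y ω ≤ R ω; nlinarith [(hR01 ω).1, (hR01 ω).2, (hY01 ω).1, (hY01 ω).2],
          (hR01 ω).2⟩)
        (fun f hf hf1 => by simpa [mul_assoc] using hm_cond f hf hf1)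
    have hub2 : ∀ ω, 0 ≤ (1 - R ω) * Y ω ∧ (1 - R ω) * Y ω ≤ 1 - R ω ∧ 1 - R ω ≤ 1 :=
      fun ω => ⟨mul_nonneg (by linarith [(hR01 ω).2]) (hY01 ω).1,
        by nlinarith [(hR01 ω).1, (hR01 ω).2, (hY01 ω).1, (hY01 ω).2],
        by linarith [(hR01 ω).1]⟩
    have h2 : ∀ᵐ ω ∂μ, 0 < 1 - R ω → 0 ≤ m (X ω) ∧ m (X ω) ≤ 1 :=
      ae_unit (u := fun ω => (1 - R ω) * Y ω) (b := fun ω => 1 - R ω) (v := m) hX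
        ((measurable_const.sub hR).mul hY) (measurable_const.sub hR) hm
        hub2
        (fun f hf hf1 => by simpa [mul_assoc] using hexch f hf hf1)
    filter_upwards [h1, h2] with ω a1 a2
    rcases hRbin ω with h | h
    · exact a2 (by rw [h]; norm_num)
    · exact a1 (by rw [h]; norm_num)
  have hmab : ∀ᵐ ω ∂μ, |m (X ω)| ≤ 1 := by
    filter_upwards [m01] with ω h; exact abs_le.2 ⟨by linarith [h.1], h.2⟩
  have p01 : ∀ᵐ ω ∂μ, 0 ≤ p (X ω) ∧ p (X ω) ≤ 1 := by
    have := ae_unit hX hR (measurable_const : Measurable fun _ : Ω => (1:ℝ)) hp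
      (fun ω => ⟨(hR01 ω).1, (hR01 ω).2, le_refl 1⟩)
      (fun f hf hf1 => by simpa using hp_cond f hf hf1)
    filter_upwards [this] with ω h; exact h one_pos
  have hpab : ∀ᵐ ω ∂μ, |p (X ω)| ≤ 1 := by
    filter_upwards [p01] with ω h; exact abs_le.2 ⟨by linarith [h.1], h.2⟩
  -- scaled conditional hypotheses
  have Hm : ∀ f : 𝓧 → ℝ, Measurable f → ∀ K : ℝ, (∀ x, |f x| ≤ K) →
      ∫ ω, f (X ω) * (R ω * Y ω) ∂μ = ∫ ω, f (X ω) * (R ω * m (X ω)) ∂μ :=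
    fun f hf K hK =>
      scaled_cond (fun f' hf' h1 => by simpa [mul_assoc] using hm_cond f' hf' h1) f hf K hK
  have Hp : ∀ f : 𝓧 → ℝ, Measurable f → ∀ K : ℝ, (∀ x, |f x| ≤ K) →
      ∫ ω, f (X ω) * R ω ∂μ = ∫ ω, f (X ω) * p (X ω) ∂μ :=
    fun f hf K hK => scaled_cond hp_cond f hf K hK
  -- the key identity
  have key : ∀ q : 𝓧 → ℝ, Measurable q → (∀ x, |q x| ≤ 1) →
      ∫ ω, ((1 - R ω) * q (X ω) * mstar (X ω)
        + wstar (X ω) * R ω * q (X ω) * (Y ω - mstar (X ω))) ∂μ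
      = ∫ ω, (1 - R ω) * q (X ω) * m (X ω) ∂μ := by
    intro q hqm hq1
    have hqmX : Measurable fun ω => q (X ω) := hqm.comp hX
    have hwsX : Measurable fun ω => wstar (X ω) := hws.comp hX
    have hmsX : Measurable fun ω => mstar (X ω) := hms.comp hX
    have hmX : Measurable fun ω => m (X ω) := hm.comp hX
    have hpX : Measurable fun ω => p (X ω) := hp.comp hX
    have IA1s : Integrable (fun ω => (1 - R ω) * q (X ω) * mstar (X ω)) μ :=
      ib (((measurable_const.sub hR).mul hqmX).mul hmsX).aestronglyMeasurable
        (Filter.Eventually.of_forall fun ω =>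
          abs_mul_le' (abs_mul_le' (h1Rb ω) (hq1 _)) (hmsD _))
    have IA2 : Integrable (fun ω => (wstar (X ω) * q (X ω)) * (R ω * Y ω)) μ :=
      ib ((hwsX.mul hqmX).mul (hR.mul hY)).aestronglyMeasurable
        (Filter.Eventually.of_forall fun ω =>
          abs_mul_le' (abs_mul_le' (hwsD _) (hq1 _)) (abs_mul_le' (hRb ω) (hYb ω)))
    have IA3s : Integrable (fun ω => (wstar (X ω) * q (X ω)) * (R ω * mstar (X ω))) μ :=
      ib ((hwsX.mul hqmX).mul (hR.mul hmsX)).aestronglyMeasurable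
        (Filter.Eventually.of_forall fun ω =>
          abs_mul_le' (abs_mul_le' (hwsD _) (hq1 _)) (abs_mul_le' (hRb ω) (hmsD _)))
    have step1 : ∫ ω, ((1 - R ω) * q (X ω) * mstar (X ω)
        + wstar (X ω) * R ω * q (X ω) * (Y ω - mstar (X ω))) ∂μ
        = ∫ ω, (1 - R ω) * q (X ω) * mstar (X ω) ∂μ
          + (∫ ω, (wstar (X ω) * q (X ω)) * (R ω * Y ω) ∂μ
             - ∫ ω, (wstar (X ω) * q (X ω)) * (R ω * mstar (X ω)) ∂μ) := by
      have IA23 : Integrable (fun ω => (wstar (X ω) * q (X ω)) * (R ω * Y ω)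
          - (wstar (X ω) * q (X ω)) * (R ω * mstar (X ω))) μ := IA2.sub IA3s
      calc ∫ ω, ((1 - R ω) * q (X ω) * mstar (X ω)
            + wstar (X ω) * R ω * q (X ω) * (Y ω - mstar (X ω))) ∂μ
          = ∫ ω, ((1 - R ω) * q (X ω) * mstar (X ω)
            + ((wstar (X ω) * q (X ω)) * (R ω * Y ω)
              - (wstar (X ω) * q (X ω)) * (R ω * mstar (X ω)))) ∂μ :=
            integral_congr_ae (Filter.Eventually.of_forall fun ω => by ring)
        _ = ∫ ω, (1 - R ω) * q (X ω) * mstar (X ω) ∂μ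
            + ∫ ω, ((wstar (X ω) * q (X ω)) * (R ω * Y ω)
              - (wstar (X ω) * q (X ω)) * (R ω * mstar (X ω))) ∂μ :=
            integral_add IA1s IA23
        _ = ∫ ω, (1 - R ω) * q (X ω) * mstar (X ω) ∂μ
            + (∫ ω, (wstar (X ω) * q (X ω)) * (R ω * Y ω) ∂μ
             - ∫ ω, (wstar (X ω) * q (X ω)) * (R ω * mstar (X ω)) ∂μ) := by
            rw [integral_sub IA2 IA3s]
    have hwqD : ∀ x, |wstar x * q x| ≤ D * 1 := fun x => abs_mul_le' (hwsD x) (hq1 x)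
    have hEY : ∫ ω, (wstar (X ω) * q (X ω)) * (R ω * Y ω) ∂μ
        = ∫ ω, (wstar (X ω) * q (X ω)) * (R ω * m (X ω)) ∂μ :=
      Hm (fun x => wstar x * q x) (hws.mul hqm) (D * 1) hwqD
    rcases hdr with hc | hc
    · -- correct outcome model
      simp only [hc] at step1 hEY ⊢
      rw [step1, hEY]
      ring
    · -- correct odds model
      have hwp : ∀ᵐ ω ∂μ, wstar (X ω) * p (X ω) = 1 - p (X ω) := by
        filter_upwards [hpos] with ω h
        rw [hc]
        exact div_mul_cancel₀ _ h.ne'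
      set mt : 𝓧 → ℝ := fun x => max 0 (min (m x) 1) with hmtdef
      have hmtm : Measurable mt := measurable_const.max (hm.min measurable_const)
      have hmtX : Measurable fun ω => mt (X ω) := hmtm.comp hX
      have hmt1 : ∀ x, |mt x| ≤ 1 := fun x => abs_le.2
        ⟨le_trans (by norm_num) (le_max_left 0 (min (m x) 1)),
          max_le zero_le_one (min_le_right _ _)⟩
      have hmtae : ∀ᵐ ω ∂μ, mt (X ω) = m (X ω) := by
        filter_upwards [m01] with ω h
        simp only [hmtdef]
        rw [min_eq_left h.2, max_eq_right h.1]
      -- integrabilities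
      have Iqms : Integrable (fun ω => q (X ω) * mstar (X ω)) μ :=
        ib (hqmX.mul hmsX).aestronglyMeasurable
          (Filter.Eventually.of_forall fun ω => abs_mul_le' (hq1 _) (hmsD _))
      have IqmsR : Integrable (fun ω => (q (X ω) * mstar (X ω)) * R ω) μ :=
        ib ((hqmX.mul hmsX).mul hR).aestronglyMeasurable
          (Filter.Eventually.of_forall fun ω =>
            abs_mul_le' (abs_mul_le' (hq1 _) (hmsD _)) (hRb ω))
      have Iqmsp : Integrable (fun ω => (q (X ω) * mstar (X ω)) * p (X ω)) μ :=
        ib ((hqmX.mul hmsX).mul hpX).aestronglyMeasurable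
          (by filter_upwards [hpab] with ω h
              exact abs_mul_le' (abs_mul_le' (hq1 _) (hmsD _)) h)
      have Iqmt : Integrable (fun ω => q (X ω) * mt (X ω)) μ :=
        ib (hqmX.mul hmtX).aestronglyMeasurable
          (Filter.Eventually.of_forall fun ω => abs_mul_le' (hq1 _) (hmt1 _))
      have IqmtR : Integrable (fun ω => (q (X ω) * mt (X ω)) * R ω) μ :=
        ib ((hqmX.mul hmtX).mul hR).aestronglyMeasurable
          (Filter.Eventually.of_forall fun ω =>
            abs_mul_le' (abs_mul_le' (hq1 _) (hmt1 _)) (hRb ω))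
      have Iqmtp : Integrable (fun ω => (q (X ω) * mt (X ω)) * p (X ω)) μ :=
        ib ((hqmX.mul hmtX).mul hpX).aestronglyMeasurable
          (by filter_upwards [hpab] with ω h
              exact abs_mul_le' (abs_mul_le' (hq1 _) (hmt1 _)) h)
      -- E[ (1-R) q m* ] = E[ (1-p) q m* ]
      have ET1 : ∫ ω, (1 - R ω) * q (X ω) * mstar (X ω) ∂μ
          = ∫ ω, (1 - p (X ω)) * q (X ω) * mstar (X ω) ∂μ := by
        have h1 : ∫ ω, (q (X ω) * mstar (X ω)) * R ω ∂μ
            = ∫ ω, (q (X ω) * mstar (X ω)) * p (X ω) ∂μ :=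
          Hp (fun x => q x * mstar x) (hqm.mul hms) (1 * D)
            (fun x => abs_mul_le' (hq1 x) (hmsD x))
        calc ∫ ω, (1 - R ω) * q (X ω) * mstar (X ω) ∂μ
            = ∫ ω, (q (X ω) * mstar (X ω) - (q (X ω) * mstar (X ω)) * R ω) ∂μ :=
              integral_congr_ae (Filter.Eventually.of_forall fun ω => by ring)
          _ = ∫ ω, q (X ω) * mstar (X ω) ∂μ - ∫ ω, (q (X ω) * mstar (X ω)) * R ω ∂μ :=
              integral_sub Iqms IqmsR
          _ = ∫ ω, q (X ω) * mstar (X ω) ∂μ - ∫ ω, (q (X ω) * mstar (X ω)) * p (X ω) ∂μ := by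
              rw [h1]
          _ = ∫ ω, (q (X ω) * mstar (X ω) - (q (X ω) * mstar (X ω)) * p (X ω)) ∂μ :=
              (integral_sub Iqms Iqmsp).symm
          _ = ∫ ω, (1 - p (X ω)) * q (X ω) * mstar (X ω) ∂μ :=
              integral_congr_ae (Filter.Eventually.of_forall fun ω => by ring)
      -- E[ (1-R) q m ] = E[ (1-p) q m ]
      have ET5 : ∫ ω, (1 - R ω) * q (X ω) * m (X ω) ∂μ
          = ∫ ω, (1 - p (X ω)) * q (X ω) * m (X ω) ∂μ := by
        have h1 : ∫ ω, (q (X ω) * mt (X ω)) * R ω ∂μ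
            = ∫ ω, (q (X ω) * mt (X ω)) * p (X ω) ∂μ :=
          Hp (fun x => q x * mt x) (hqm.mul hmtm) (1 * 1)
            (fun x => abs_mul_le' (hq1 x) (hmt1 x))
        calc ∫ ω, (1 - R ω) * q (X ω) * m (X ω) ∂μ
            = ∫ ω, (q (X ω) * mt (X ω) - (q (X ω) * mt (X ω)) * R ω) ∂μ :=
              integral_congr_ae (by filter_upwards [hmtae] with ω h; rw [h]; ring)
          _ = ∫ ω, q (X ω) * mt (X ω) ∂μ - ∫ ω, (q (X ω) * mt (X ω)) * R ω ∂μ :=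
              integral_sub Iqmt IqmtR
          _ = ∫ ω, q (X ω) * mt (X ω) ∂μ - ∫ ω, (q (X ω) * mt (X ω)) * p (X ω) ∂μ := by
              rw [h1]
          _ = ∫ ω, (q (X ω) * mt (X ω) - (q (X ω) * mt (X ω)) * p (X ω)) ∂μ :=
              (integral_sub Iqmt Iqmtp).symm
          _ = ∫ ω, (1 - p (X ω)) * q (X ω) * m (X ω) ∂μ :=
              integral_congr_ae (by filter_upwards [hmtae] with ω h; rw [h]; ring)
      -- E[ w q R m ] = E[ (1-p) q m ]
      have ET2 : ∫ ω, (wstar (X ω) * q (X ω)) * (R ω * m (X ω)) ∂μ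
          = ∫ ω, (1 - p (X ω)) * q (X ω) * m (X ω) ∂μ := by
        have h1 : ∫ ω, (wstar (X ω) * q (X ω) * mt (X ω)) * R ω ∂μ
            = ∫ ω, (wstar (X ω) * q (X ω) * mt (X ω)) * p (X ω) ∂μ :=
          Hp (fun x => wstar x * q x * mt x) ((hws.mul hqm).mul hmtm) (D * 1 * 1)
            (fun x => abs_mul_le' (hwqD x) (hmt1 x))
        calc ∫ ω, (wstar (X ω) * q (X ω)) * (R ω * m (X ω)) ∂μ
            = ∫ ω, (wstar (X ω) * q (X ω) * mt (X ω)) * R ω ∂μ :=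
              integral_congr_ae (by filter_upwards [hmtae] with ω h; rw [h]; ring)
          _ = ∫ ω, (wstar (X ω) * q (X ω) * mt (X ω)) * p (X ω) ∂μ := h1
          _ = ∫ ω, (1 - p (X ω)) * q (X ω) * m (X ω) ∂μ := by
              refine integral_congr_ae ?_
              filter_upwards [hmtae, hwp] with ω h h'
              rw [h, show wstar (X ω) * q (X ω) * m (X ω) * p (X ω)
                  = wstar (X ω) * p (X ω) * (q (X ω) * m (X ω)) from by ring, h']
              ring
      -- E[ w q R m* ] = E[ (1-p) q m* ]
      have ET4 : ∫ ω, (wstar (X ω) * q (X ω)) * (R ω * mstar (X ω)) ∂μ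
          = ∫ ω, (1 - p (X ω)) * q (X ω) * mstar (X ω) ∂μ := by
        have h1 : ∫ ω, (wstar (X ω) * q (X ω) * mstar (X ω)) * R ω ∂μ
            = ∫ ω, (wstar (X ω) * q (X ω) * mstar (X ω)) * p (X ω) ∂μ :=
          Hp (fun x => wstar x * q x * mstar x) ((hws.mul hqm).mul hms) (D * 1 * D)
            (fun x => abs_mul_le' (hwqD x) (hmsD x))
        calc ∫ ω, (wstar (X ω) * q (X ω)) * (R ω * mstar (X ω)) ∂μ
            = ∫ ω, (wstar (X ω) * q (X ω) * mstar (X ω)) * R ω ∂μ :=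
              integral_congr_ae (Filter.Eventually.of_forall fun ω => by ring)
          _ = ∫ ω, (wstar (X ω) * q (X ω) * mstar (X ω)) * p (X ω) ∂μ := h1
          _ = ∫ ω, (1 - p (X ω)) * q (X ω) * mstar (X ω) ∂μ := by
              refine integral_congr_ae ?_
              filter_upwards [hwp] with ω h'
              rw [show wstar (X ω) * q (X ω) * mstar (X ω) * p (X ω)
                  = wstar (X ω) * p (X ω) * (q (X ω) * mstar (X ω)) from by ring, h']
              ring
      rw [step1, hEY, ET2, ET1, ET4, ET5]
      ring
  -- assemble
  have hnum := key g hg hg1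
  have hden := key (fun _ => (1:ℝ)) measurable_const (fun _ => by norm_num)
  simp only [mul_one, one_mul] at hden
  have hrn : ∫ ω, (1 - R ω) * g (X ω) * Y ω ∂μ
      = ∫ ω, (1 - R ω) * g (X ω) * m (X ω) ∂μ := by
    calc ∫ ω, (1 - R ω) * g (X ω) * Y ω ∂μ = ∫ ω, g (X ω) * (1 - R ω) * Y ω ∂μ :=
        integral_congr_ae (Filter.Eventually.of_forall fun ω => by ring)
      _ = ∫ ω, g (X ω) * (1 - R ω) * m (X ω) ∂μ := hexch g hg hg1
      _ = ∫ ω, (1 - R ω) * g (X ω) * m (X ω) ∂μ :=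
        integral_congr_ae (Filter.Eventually.of_forall fun ω => by ring)
  have hrd : ∫ ω, (1 - R ω) * Y ω ∂μ = ∫ ω, (1 - R ω) * m (X ω) ∂μ := by
    have h := hexch (fun _ => (1:ℝ)) measurable_const (fun _ => by norm_num)
    simpa using h
  rw [hnum, hden, hrn, hrd]
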